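/- Let (u,v) be a radial solution of -(ru')' = r e^v(e^u+1), -(rv')' = r e^u(e^v-1) on (0,∞) with u - 2N₁ ln r and v - 2N₂ ln r bounded near 0. Then ∫₀^∞ r e^{u+v} dr < ∞ and ∫₀^∞ r e^u dr < ∞. -/

import Mathlib

open MeasureTheory Real Set Filter

lemma flux_eq (w g : ℝ → ℝ) (hw : ContDiffOn ℝ 2 w (Set.Ioi 0))
    (hg : ContinuousOn g (Set.Ioi 0))
    (hode : ∀ r > (0:ℝ), deriv (fun s => s * deriv w s) r = g r)
    {a b : ℝ} (ha : 0 < a) (hab : a ≤ b) :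
    b * deriv w b - a * deriv w a = ∫ s in a..b, g s := by
  have hsub : Set.uIcc a b ⊆ Set.Ioi 0 := by
    rw [Set.uIcc_of_le hab]
    intro x hx; exact lt_of_lt_of_le ha hx.1
  have hdw : ContDiffOn ℝ 1 (deriv w) (Set.Ioi 0) :=
    hw.deriv_of_isOpen isOpen_Ioi (by norm_num)
  have hd : ∀ r ∈ Set.uIcc a b,
      HasDerivAt (fun s => s * deriv w s) (g r) r := by
    intro r hr
    have hr0 : (0:ℝ) < r := hsub hr
    have h1 : DifferentiableAt ℝ (deriv w) r :=
      (hdw.differentiableOn (by norm_num)).differentiableAt (isOpen_Ioi.mem_nhds hr0)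
    have hφ : DifferentiableAt ℝ (fun s => s * deriv w s) r :=
      differentiableAt_id.mul h1
    have := hφ.hasDerivAt
    rwa [hode r hr0] at this
  have hint : IntervalIntegrable g volume a b :=
    (hg.mono hsub).intervalIntegrable
  exact (intervalIntegral.integral_eq_sub_of_hasDerivAt hd hint).symm

lemma log_decay (w : ℝ → ℝ) (hw : ContDiffOn ℝ 2 w (Set.Ioi 0)) {R k : ℝ} (hR : 0 < R)
    (hk : ∀ r, R ≤ r → r * deriv w r ≤ -k) :
    ∀ r, R ≤ r → w r ≤ w R - k * (Real.log r - Real.log R) := by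
  intro r hr
  have hr0 : (0:ℝ) < r := lt_of_lt_of_le hR hr
  have hsub : Set.uIcc R r ⊆ Set.Ioi 0 := by
    rw [Set.uIcc_of_le hr]; intro x hx; exact lt_of_lt_of_le hR hx.1
  have hdwc : ContinuousOn (deriv w) (Set.Ioi 0) :=
    hw.continuousOn_deriv_of_isOpen isOpen_Ioi (by norm_num)
  have hd : ∀ x ∈ Set.uIcc R r, HasDerivAt w (deriv w x) x := by
    intro x hx
    exact ((hw.differentiableOn (by norm_num)).differentiableAt
      (isOpen_Ioi.mem_nhds (hsub hx))).hasDerivAt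
  have hint : IntervalIntegrable (deriv w) volume R r := (hdwc.mono hsub).intervalIntegrable
  have hftc : w r - w R = ∫ s in R..r, deriv w s :=
    (intervalIntegral.integral_eq_sub_of_hasDerivAt hd hint).symm
  have hcont : ContinuousOn (fun s : ℝ => -k * s⁻¹) (Set.uIcc R r) := by
    apply ContinuousOn.mul continuousOn_const
    exact ContinuousOn.inv₀ continuousOn_id (fun x hx => ne_of_gt (hsub hx))
  have hint2 : IntervalIntegrable (fun s => -k * s⁻¹) volume R r := hcont.intervalIntegrable
  have hmono : ∫ s in R..r, deriv w s ≤ ∫ s in R..r, -k * s⁻¹ := by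
    apply intervalIntegral.integral_mono_on hr hint hint2
    intro x hx
    have hx0 : (0:ℝ) < x := lt_of_lt_of_le hR hx.1
    have h := hk x hx.1
    rw [show -k * x⁻¹ = -k / x from (div_eq_mul_inv _ _).symm, le_div_iff₀ hx0]
    nlinarith
  have hval : ∫ s in R..r, -k * s⁻¹ = -k * (Real.log r - Real.log R) := by
    rw [intervalIntegral.integral_const_mul, integral_inv_of_pos hR hr0,
      Real.log_div (ne_of_gt hr0) (ne_of_gt hR)]
  linarith [hftc, hmono, hval.symm ▸ hmono]

lemma integrableOn_Ioc_near0 (h : ℝ → ℝ) (hc : ContinuousOn h (Set.Ioi 0))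
    {a M : ℝ} (ha : 0 < a) (hM : ∀ s ∈ Set.Ioo 0 a, |h s| ≤ M) (R : ℝ) :
    MeasureTheory.IntegrableOn h (Set.Ioc 0 R) := by
  rcases le_or_gt R 0 with hR | hR
  · rw [Set.Ioc_eq_empty (by linarith)]; exact integrableOn_empty
  · set b := min (a/2) R with hb
    have hb0 : 0 < b := lt_min (by linarith) hR
    have hbR : b ≤ R := min_le_right _ _
    have h1 : MeasureTheory.IntegrableOn h (Set.Ioc 0 b) := by
      have hsub : Set.Ioc 0 b ⊆ Set.Ioo 0 a := fun x hx =>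
        ⟨hx.1, lt_of_le_of_lt (hx.2.trans (min_le_left _ _)) (by linarith)⟩
      have hmeas : AEStronglyMeasurable h (volume.restrict (Set.Ioc 0 b)) :=
        (hc.mono (fun x hx => hx.1)).aestronglyMeasurable measurableSet_Ioc
      refine Integrable.mono' (integrable_const M) hmeas ?_
      rw [ae_restrict_iff' measurableSet_Ioc]
      exact Filter.Eventually.of_forall (fun x hx => hM x (hsub hx))
    have h2 : MeasureTheory.IntegrableOn h (Set.Ioc b R) := by
      apply MeasureTheory.IntegrableOn.mono_set _ Set.Ioc_subset_Icc_self
      exact (hc.mono (fun x hx => lt_of_lt_of_le hb0 hx.1)).integrableOn_Icc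
    have : Set.Ioc 0 R = Set.Ioc 0 b ∪ Set.Ioc b R :=
      (Set.Ioc_union_Ioc_eq_Ioc (le_of_lt hb0) hbR).symm
    rw [this]; exact h1.union h2

lemma intInt_of_pos (h : ℝ → ℝ) (hc : ContinuousOn h (Set.Ioi 0)) {b c : ℝ}
    (hb : 0 < b) (hc' : 0 < c) : IntervalIntegrable h volume b c := by
  apply ContinuousOn.intervalIntegrable
  apply hc.mono
  intro x hx
  rw [Set.uIcc_eq_union] at hx
  rcases hx with hx | hx
  · exact lt_of_lt_of_le (lt_min hb hc') ((min_le_left b c).trans hx.1)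
  · exact lt_of_lt_of_le (lt_min hb hc') ((min_le_right b c).trans hx.1)

lemma integrableOn_Ioc_mid (h : ℝ → ℝ) (hc : ContinuousOn h (Set.Ioi 0)) {b c : ℝ}
    (hb : 0 < b) : MeasureTheory.IntegrableOn h (Set.Ioc b c) :=
  MeasureTheory.IntegrableOn.mono_set
    ((hc.mono (fun x hx => lt_of_lt_of_le hb hx.1)).integrableOn_Icc) Set.Ioc_subset_Icc_self

lemma tendsto_intervalIntegral_atTop (h : ℝ → ℝ) (hc : ContinuousOn h (Set.Ioi 0))
    (h0 : ∀ s, 0 < s → 0 ≤ h s) (hni : ¬ MeasureTheory.IntegrableOn h (Set.Ioi 1)) :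
    Filter.Tendsto (fun r => ∫ s in (1:ℝ)..r, h s) Filter.atTop Filter.atTop := by
  rw [Filter.tendsto_atTop]
  intro M
  have hex : ∃ R, 1 ≤ R ∧ M ≤ ∫ s in (1:ℝ)..R, h s := by
    by_contra hcon
    push_neg at hcon
    apply hni
    apply MeasureTheory.integrableOn_Ioi_of_intervalIntegral_norm_bounded M 1
      (b := fun n : ℕ => (n:ℝ) + 1) (l := Filter.atTop)
    · intro n
      exact (intInt_of_pos h hc one_pos (by have := n.cast_nonneg (α := ℝ); linarith)).1
    · exact Filter.tendsto_atTop_add_const_right _ 1 tendsto_natCast_atTop_atTop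
    · apply Filter.Eventually.of_forall
      intro n
      have h1n : (1:ℝ) ≤ (n:ℝ) + 1 := by have := n.cast_nonneg (α := ℝ); linarith
      have : ∫ x in (1:ℝ)..((n:ℝ)+1), ‖h x‖ = ∫ x in (1:ℝ)..((n:ℝ)+1), h x := by
        apply intervalIntegral.integral_congr
        intro x hx
        rw [Set.uIcc_of_le h1n] at hx
        exact Real.norm_of_nonneg (h0 x (by linarith [hx.1]))
      rw [this]
      exact le_of_lt (hcon ((n:ℝ)+1) h1n)
  obtain ⟨R, hR1, hRM⟩ := hex
  rw [Filter.eventually_atTop]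
  refine ⟨R, fun r hr => ?_⟩
  have hadd : ∫ s in (1:ℝ)..r, h s = (∫ s in (1:ℝ)..R, h s) + ∫ s in R..r, h s :=
    (intervalIntegral.integral_add_adjacent_intervals (intInt_of_pos h hc one_pos (by linarith))
      (intInt_of_pos h hc (by linarith) (by linarith))).symm
  have hpos : 0 ≤ ∫ s in R..r, h s :=
    intervalIntegral.integral_nonneg hr (fun x hx => h0 x (by linarith [hx.1]))
  linarith

lemma tail_integrable {R C : ℝ} (hR : 0 < R) (h : ℝ → ℝ)
    (hc : ContinuousOn h (Set.Ioi 0)) (hb : ∀ s, R ≤ s → |h s| ≤ C * s ^ (-3 : ℝ)) :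
    MeasureTheory.IntegrableOn h (Set.Ioi R) := by
  have hpow : MeasureTheory.IntegrableOn (fun s : ℝ => C * s ^ (-3:ℝ)) (Set.Ioi R) :=
    (integrableOn_Ioi_rpow_of_lt (by norm_num) hR).const_mul C
  refine Integrable.mono' hpow ?_ ?_
  · exact (hc.mono (fun x hx => lt_trans hR hx)).aestronglyMeasurable measurableSet_Ioi
  · rw [ae_restrict_iff' measurableSet_Ioi]
    exact Filter.Eventually.of_forall (fun x hx => hb x (le_of_lt hx))

lemma not_integrable_of_const_le {R c : ℝ} (hc : 0 < c) (h : ℝ → ℝ)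
    (hb : ∀ s, R ≤ s → c ≤ h s) : ¬ MeasureTheory.IntegrableOn h (Set.Ioi R) := by
  intro hint
  have : MeasureTheory.IntegrableOn (fun _ : ℝ => c) (Set.Ioi R) := by
    refine Integrable.mono' hint aestronglyMeasurable_const ?_
    rw [ae_restrict_iff' measurableSet_Ioi]
    refine Filter.Eventually.of_forall (fun x hx => ?_)
    rw [Real.norm_of_nonneg (le_of_lt hc)]
    exact hb x (le_of_lt hx)
  rw [MeasureTheory.integrableOn_const_iff] at this
  rcases this with h1 | h1
  · exact (ne_of_gt hc) (by simpa using h1)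
  · simp [Real.volume_Ioi] at h1

lemma pow3_id {R s : ℝ} (hR : 0 < R) (hs : R ≤ s) (c : ℝ) :
    s * Real.exp (c - 4 * (Real.log s - Real.log R)) =
      Real.exp (c + 4 * Real.log R) * s ^ (-3:ℝ) := by
  have hs0 : (0:ℝ) < s := lt_of_lt_of_le hR hs
  have h1 : s * Real.exp (c - 4 * (Real.log s - Real.log R)) =
      Real.exp (Real.log s + (c - 4 * (Real.log s - Real.log R))) := by
    rw [Real.exp_add, Real.exp_log hs0]
  have h2 : Real.exp (c + 4 * Real.log R) * s ^ (-3:ℝ) =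
      Real.exp ((c + 4 * Real.log R) + Real.log s * (-3)) := by
    rw [Real.rpow_def_of_pos hs0, ← Real.exp_add]
  rw [h1, h2]
  congr 1
  ring
set_option maxHeartbeats 1000000 in
theorem stmt6 (N₁ N₂ : ℕ) (u v : ℝ → ℝ)
    (hu : ContDiffOn ℝ 2 u (Set.Ioi 0)) (hv : ContDiffOn ℝ 2 v (Set.Ioi 0))
    (hODEu : ∀ r > (0 : ℝ),
      deriv (fun s => s * deriv u s) r = -(r * Real.exp (v r) * (Real.exp (u r) + 1)))
    (hODEv : ∀ r > (0 : ℝ),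
      deriv (fun s => s * deriv v s) r = -(r * Real.exp (u r) * (Real.exp (v r) - 1)))
    (hu0 : ∃ C ε, 0 < ε ∧ ∀ r ∈ Set.Ioo (0 : ℝ) ε, |u r - 2 * N₁ * Real.log r| ≤ C)
    (hv0 : ∃ C ε, 0 < ε ∧ ∀ r ∈ Set.Ioo (0 : ℝ) ε, |v r - 2 * N₂ * Real.log r| ≤ C) :
    IntegrableOn (fun t => t * Real.exp (u t + v t)) (Set.Ioi 0) ∧
    IntegrableOn (fun t => t * Real.exp (u t)) (Set.Ioi 0) := by
  obtain ⟨C₁, ε₁, hε₁, hC₁⟩ := hu0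
  obtain ⟨C₂, ε₂, hε₂, hC₂⟩ := hv0
  set a : ℝ := min 1 (min ε₁ ε₂) with ha_def
  have ha : 0 < a := lt_min one_pos (lt_min hε₁ hε₂)
  have ha1 : a ≤ 1 := min_le_left _ _
  have hcu : ContinuousOn u (Set.Ioi 0) := hu.continuousOn
  have hcv : ContinuousOn v (Set.Ioi 0) := hv.continuousOn
  have hub : ∀ s ∈ Set.Ioo (0:ℝ) a, u s ≤ C₁ := by
    intro s hs
    have h1 := (abs_le.1 (hC₁ s ⟨hs.1,
      lt_of_lt_of_le hs.2 ((min_le_right _ _).trans (min_le_left _ _))⟩)).2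
    have hlog : Real.log s ≤ 0 :=
      Real.log_nonpos (le_of_lt hs.1) (le_of_lt (lt_of_lt_of_le hs.2 ha1))
    have hN : (0:ℝ) ≤ 2 * (N₁:ℝ) := by positivity
    nlinarith [mul_nonpos_of_nonneg_of_nonpos hN hlog]
  have hvb : ∀ s ∈ Set.Ioo (0:ℝ) a, v s ≤ C₂ := by
    intro s hs
    have h1 := (abs_le.1 (hC₂ s ⟨hs.1,
      lt_of_lt_of_le hs.2 ((min_le_right _ _).trans (min_le_right _ _))⟩)).2
    have hlog : Real.log s ≤ 0 :=
      Real.log_nonpos (le_of_lt hs.1) (le_of_lt (lt_of_lt_of_le hs.2 ha1))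
    have hN : (0:ℝ) ≤ 2 * (N₂:ℝ) := by positivity
    nlinarith [mul_nonpos_of_nonneg_of_nonpos hN hlog]
  have hcEuv : ContinuousOn (fun t : ℝ => t * Real.exp (u t + v t)) (Set.Ioi 0) :=
    continuousOn_id.mul (Real.continuous_exp.comp_continuousOn (hcu.add hcv))
  have hcEu : ContinuousOn (fun t : ℝ => t * Real.exp (u t)) (Set.Ioi 0) :=
    continuousOn_id.mul (Real.continuous_exp.comp_continuousOn hcu)
  have hcEv : ContinuousOn (fun t : ℝ => t * Real.exp (v t)) (Set.Ioi 0) :=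
    continuousOn_id.mul (Real.continuous_exp.comp_continuousOn hcv)
  have hcgU : ContinuousOn (fun s : ℝ => s * Real.exp (v s) * (Real.exp (u s) + 1))
      (Set.Ioi 0) :=
    hcEv.mul ((Real.continuous_exp.comp_continuousOn hcu).add continuousOn_const)
  have hcgV : ContinuousOn (fun s : ℝ => s * Real.exp (u s) * (Real.exp (v s) - 1))
      (Set.Ioi 0) :=
    hcEu.mul ((Real.continuous_exp.comp_continuousOn hcv).sub continuousOn_const)
  have hnearEuv : ∀ R : ℝ, IntegrableOn (fun t => t * Real.exp (u t + v t)) (Set.Ioc 0 R) := by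
    intro R
    apply integrableOn_Ioc_near0 _ hcEuv ha (M := Real.exp C₁ * Real.exp C₂) (R := R)
    intro s hs
    have hs0 : (0:ℝ) < s := hs.1
    rw [abs_of_nonneg (by positivity)]
    have h1 : Real.exp (u s + v s) ≤ Real.exp C₁ * Real.exp C₂ := by
      rw [← Real.exp_add]; exact Real.exp_le_exp.2 (add_le_add (hub s hs) (hvb s hs))
    calc s * Real.exp (u s + v s) ≤ 1 * (Real.exp C₁ * Real.exp C₂) :=
          mul_le_mul (le_of_lt (lt_of_lt_of_le hs.2 ha1)) h1 (by positivity) (by norm_num)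
      _ = _ := one_mul _
  have hnearEu : ∀ R : ℝ, IntegrableOn (fun t => t * Real.exp (u t)) (Set.Ioc 0 R) := by
    intro R
    apply integrableOn_Ioc_near0 _ hcEu ha (M := Real.exp C₁) (R := R)
    intro s hs
    have hs0 : (0:ℝ) < s := hs.1
    rw [abs_of_nonneg (by positivity)]
    calc s * Real.exp (u s) ≤ 1 * Real.exp C₁ :=
          mul_le_mul (le_of_lt (lt_of_lt_of_le hs.2 ha1))
            (Real.exp_le_exp.2 (hub s hs)) (by positivity) (by norm_num)
      _ = _ := one_mul _
  have hDU : ∀ r, 1 ≤ r → r * deriv u r = deriv u 1 -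
      ∫ s in (1:ℝ)..r, s * Real.exp (v s) * (Real.exp (u s) + 1) := by
    intro r hr
    have h := flux_eq u (fun s => -(s * Real.exp (v s) * (Real.exp (u s) + 1))) hu
      hcgU.neg hODEu one_pos hr
    rw [intervalIntegral.integral_neg] at h
    linarith
  have hDV : ∀ r, 1 ≤ r → r * deriv v r = deriv v 1 -
      ∫ s in (1:ℝ)..r, s * Real.exp (u s) * (Real.exp (v s) - 1) := by
    intro r hr
    have h := flux_eq v (fun s => -(s * Real.exp (u s) * (Real.exp (v s) - 1))) hv
      hcgV.neg hODEv one_pos hr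
    rw [intervalIntegral.integral_neg] at h
    linarith
  have hgVeq : ∀ s : ℝ, s * Real.exp (u s) * (Real.exp (v s) - 1)
      = s * Real.exp (u s + v s) - s * Real.exp (u s) := by
    intro s; rw [Real.exp_add]; ring
  have hsplit : Set.Ioi (0:ℝ) = Set.Ioc 0 1 ∪ Set.Ioi 1 :=
    (Set.Ioc_union_Ioi_eq_Ioi zero_le_one).symm
  by_cases hgU : IntegrableOn (fun s => s * Real.exp (v s) * (Real.exp (u s) + 1)) (Set.Ioi 1)
  · -- Case A
    have hEuv1 : IntegrableOn (fun t => t * Real.exp (u t + v t)) (Set.Ioi 1) := by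
      refine Integrable.mono' hgU
        ((hcEuv.mono (fun x (hx : x ∈ Set.Ioi 1) => lt_trans one_pos hx)).aestronglyMeasurable
          measurableSet_Ioi) ?_
      rw [ae_restrict_iff' measurableSet_Ioi]
      refine Filter.Eventually.of_forall (fun x hx => ?_)
      have hx0 : (0:ℝ) < x := lt_trans one_pos hx
      rw [Real.norm_of_nonneg (by positivity), Real.exp_add]
      nlinarith [Real.exp_pos (v x), Real.exp_pos (u x), mul_pos hx0 (Real.exp_pos (v x))]
    have hEv1 : IntegrableOn (fun t => t * Real.exp (v t)) (Set.Ioi 1) := by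
      refine Integrable.mono' hgU
        ((hcEv.mono (fun x (hx : x ∈ Set.Ioi 1) => lt_trans one_pos hx)).aestronglyMeasurable
          measurableSet_Ioi) ?_
      rw [ae_restrict_iff' measurableSet_Ioi]
      refine Filter.Eventually.of_forall (fun x hx => ?_)
      have hx0 : (0:ℝ) < x := lt_trans one_pos hx
      rw [Real.norm_of_nonneg (by positivity)]
      nlinarith [Real.exp_pos (v x), Real.exp_pos (u x), mul_pos hx0 (Real.exp_pos (v x))]
    refine ⟨by rw [hsplit]; exact (hnearEuv 1).union hEuv1, ?_⟩
    suffices hEu1 : IntegrableOn (fun t => t * Real.exp (u t)) (Set.Ioi 1) by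
      rw [hsplit]; exact (hnearEu 1).union hEu1
    by_contra hEu1
    have hT := tendsto_intervalIntegral_atTop _ hcEu (fun s hs => by positivity) hEu1
    set M : ℝ := ∫ x in Set.Ioi 1, x * Real.exp (u x + v x) with hM
    have hMb : ∀ r, 1 ≤ r → ∫ s in (1:ℝ)..r, s * Real.exp (u s + v s) ≤ M := by
      intro r hr
      rw [intervalIntegral.integral_of_le hr]
      apply MeasureTheory.setIntegral_mono_set hEuv1
      · refine MeasureTheory.ae_restrict_of_forall_mem measurableSet_Ioi (fun x hx => ?_)
        have hx0 : (0:ℝ) < x := lt_trans one_pos hx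
        simp only [Pi.zero_apply]
        positivity
      · exact (Set.Ioc_subset_Ioi_self).eventuallyLE
    have hFVle : ∀ r, 1 ≤ r → ∫ s in (1:ℝ)..r, s * Real.exp (u s) * (Real.exp (v s) - 1)
        ≤ M - ∫ s in (1:ℝ)..r, s * Real.exp (u s) := by
      intro r hr
      have hsi : ∫ s in (1:ℝ)..r, s * Real.exp (u s) * (Real.exp (v s) - 1)
          = (∫ s in (1:ℝ)..r, s * Real.exp (u s + v s))
            - ∫ s in (1:ℝ)..r, s * Real.exp (u s) := by
        rw [← intervalIntegral.integral_sub (intInt_of_pos _ hcEuv one_pos (by linarith))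
          (intInt_of_pos _ hcEu one_pos (by linarith))]
        exact intervalIntegral.integral_congr (fun x _ => hgVeq x)
      rw [hsi]
      linarith [hMb r hr]
    have hev : ∀ᶠ r in Filter.atTop, (1:ℝ) ≤ r ∧
        (M - deriv v 1) ≤ ∫ s in (1:ℝ)..r, s * Real.exp (u s) :=
      (Filter.eventually_ge_atTop 1).and (hT.eventually_ge_atTop _)
    obtain ⟨R, hR⟩ := Filter.eventually_atTop.1 hev
    have hR1 : 1 ≤ R := (hR R le_rfl).1
    have hvlow : ∀ r, R ≤ r → 0 ≤ r * deriv v r := by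
      intro r hr
      obtain ⟨hr1, hrM⟩ := hR r hr
      have h1 := hDV r hr1
      have h2 := hFVle r hr1
      linarith
    have hvmono : ∀ r, R ≤ r → -(v r) ≤ -(v R) - 0 * (Real.log r - Real.log R) := by
      apply log_decay (fun s => -(v s)) hv.neg (show (0:ℝ) < R by linarith)
      intro r hr
      rw [deriv.fun_neg, mul_neg]
      linarith [hvlow r hr]
    have hEvlb : ∀ s, R ≤ s → R * Real.exp (v R) ≤ s * Real.exp (v s) := by
      intro s hs
      have h1 : v R ≤ v s := by have := hvmono s hs; nlinarith
      exact mul_le_mul hs (Real.exp_le_exp.2 h1) (le_of_lt (Real.exp_pos _)) (by linarith)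
    exact not_integrable_of_const_le
      (mul_pos (by linarith) (Real.exp_pos _)) _ hEvlb
      (hEv1.mono_set (Set.Ioi_subset_Ioi hR1))
  · -- Case B
    have hTU := tendsto_intervalIntegral_atTop _ hcgU
      (fun s hs => by positivity) hgU
    have hevU : ∀ᶠ r in Filter.atTop, (1:ℝ) ≤ r ∧ deriv u 1 + 4 ≤
        ∫ s in (1:ℝ)..r, s * Real.exp (v s) * (Real.exp (u s) + 1) :=
      (Filter.eventually_ge_atTop 1).and (hTU.eventually_ge_atTop _)
    obtain ⟨R₁, hR₁⟩ := Filter.eventually_atTop.1 hevU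
    have hR₁1 : 1 ≤ R₁ := (hR₁ R₁ le_rfl).1
    have hR₁0 : (0:ℝ) < R₁ := by linarith
    have hulow : ∀ r, R₁ ≤ r → r * deriv u r ≤ -4 := by
      intro r hr
      obtain ⟨h1, h2⟩ := hR₁ r hr
      have := hDU r h1
      linarith
    have hudecay := log_decay u hu hR₁0 hulow
    have hEuTail : IntegrableOn (fun t => t * Real.exp (u t)) (Set.Ioi R₁) := by
      apply tail_integrable hR₁0 _ hcEu (C := Real.exp (u R₁ + 4 * Real.log R₁))
      intro s hs
      have hs0 : (0:ℝ) < s := by linarith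
      rw [abs_of_nonneg (by positivity), ← pow3_id hR₁0 hs (u R₁)]
      exact mul_le_mul_of_nonneg_left (Real.exp_le_exp.2 (hudecay s hs)) (le_of_lt hs0)
    have hEu0 : IntegrableOn (fun t => t * Real.exp (u t)) (Set.Ioi 0) := by
      rw [show Set.Ioi (0:ℝ) = Set.Ioc 0 R₁ ∪ Set.Ioi R₁ from
        (Set.Ioc_union_Ioi_eq_Ioi (by linarith)).symm]
      exact (hnearEu R₁).union hEuTail
    refine ⟨?_, hEu0⟩
    rw [hsplit]
    refine (hnearEuv 1).union ?_
    by_contra hEuv1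
    have hTuv := tendsto_intervalIntegral_atTop _ hcEuv (fun s hs => by positivity) hEuv1
    set M' : ℝ := ∫ x in Set.Ioi 1, x * Real.exp (u x) with hM'
    have hEu1 : IntegrableOn (fun t => t * Real.exp (u t)) (Set.Ioi 1) :=
      hEu0.mono_set (Set.Ioi_subset_Ioi zero_le_one)
    have hMb' : ∀ r, 1 ≤ r → ∫ s in (1:ℝ)..r, s * Real.exp (u s) ≤ M' := by
      intro r hr
      rw [intervalIntegral.integral_of_le hr]
      apply MeasureTheory.setIntegral_mono_set hEu1
      · refine MeasureTheory.ae_restrict_of_forall_mem measurableSet_Ioi (fun x hx => ?_)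
        have hx0 : (0:ℝ) < x := lt_trans one_pos hx
        simp only [Pi.zero_apply]
        positivity
      · exact (Set.Ioc_subset_Ioi_self).eventuallyLE
    have hFVge : ∀ r, 1 ≤ r → (∫ s in (1:ℝ)..r, s * Real.exp (u s + v s)) - M'
        ≤ ∫ s in (1:ℝ)..r, s * Real.exp (u s) * (Real.exp (v s) - 1) := by
      intro r hr
      have hsi : ∫ s in (1:ℝ)..r, s * Real.exp (u s) * (Real.exp (v s) - 1)
          = (∫ s in (1:ℝ)..r, s * Real.exp (u s + v s))
            - ∫ s in (1:ℝ)..r, s * Real.exp (u s) := by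
        rw [← intervalIntegral.integral_sub (intInt_of_pos _ hcEuv one_pos (by linarith))
          (intInt_of_pos _ hcEu one_pos (by linarith))]
        exact intervalIntegral.integral_congr (fun x _ => hgVeq x)
      rw [hsi]
      linarith [hMb' r hr]
    have hev2 : ∀ᶠ r in Filter.atTop, (max 1 R₁ ≤ r) ∧ deriv v 1 + M' + 4 ≤
        ∫ s in (1:ℝ)..r, s * Real.exp (u s + v s) :=
      (Filter.eventually_ge_atTop _).and (hTuv.eventually_ge_atTop _)
    obtain ⟨R₂', hR₂'⟩ := Filter.eventually_atTop.1 hev2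
    set R₂ : ℝ := max R₂' (max 1 R₁) with hR₂def
    have hR₂1 : 1 ≤ R₂ := le_trans (le_max_left 1 R₁) (le_max_right _ _)
    have hR₂R₁ : R₁ ≤ R₂ := le_trans (le_max_right 1 R₁) (le_max_right _ _)
    have hR₂0 : (0:ℝ) < R₂ := by linarith
    have hR₂prop : ∀ r, R₂ ≤ r → (max 1 R₁ ≤ r) ∧ deriv v 1 + M' + 4 ≤
        ∫ s in (1:ℝ)..r, s * Real.exp (u s + v s) :=
      fun r hr => hR₂' r (le_trans (le_max_left _ _) hr)
    have hvhigh : ∀ r, R₂ ≤ r → r * deriv v r ≤ -4 := by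
      intro r hr
      obtain ⟨h1, h2⟩ := hR₂prop r hr
      have hr1 : (1:ℝ) ≤ r := le_trans (le_max_left 1 R₁) h1
      have h3 := hDV r hr1
      have h4 := hFVge r hr1
      linarith
    have hvdecay := log_decay v hv hR₂0 hvhigh
    have hcu_bound : ∀ s, R₂ ≤ s → u s ≤ u R₁ + 4 * Real.log R₁ := by
      intro s hs
      have hsR₁ : R₁ ≤ s := le_trans hR₂R₁ hs
      have hlogs : 0 ≤ Real.log s := Real.log_nonneg (by linarith)
      have := hudecay s hsR₁
      linarith
    have hEuvTail : IntegrableOn (fun t => t * Real.exp (u t + v t)) (Set.Ioi R₂) := by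
      apply tail_integrable hR₂0 _ hcEuv
        (C := Real.exp ((u R₁ + 4 * Real.log R₁ + v R₂) + 4 * Real.log R₂))
      intro s hs
      have hs0 : (0:ℝ) < s := by linarith
      rw [abs_of_nonneg (by positivity),
        ← pow3_id hR₂0 hs (u R₁ + 4 * Real.log R₁ + v R₂)]
      apply mul_le_mul_of_nonneg_left _ (le_of_lt hs0)
      apply Real.exp_le_exp.2
      have h1 := hcu_bound s hs
      have h2 := hvdecay s hs
      linarith
    apply hEuv1
    rw [show Set.Ioi (1:ℝ) = Set.Ioc 1 R₂ ∪ Set.Ioi R₂ from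
      (Set.Ioc_union_Ioi_eq_Ioi hR₂1).symm]
    exact (integrableOn_Ioc_mid _ hcEuv one_pos).union hEuvTail
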